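/- Let Γ be a rectifiable curve in ℝ² parametrized by arc length p : ℝ → ℝ² (so |p(t)−p(τ)| ≤ |t−τ|), with curvature bounded in absolute value by K₀ > 0 (i.e., p' is Lipschitz with constant K₀). Then for all t, τ with |t−τ| ≤ π/K₀, one has |p(t) − p(τ)| ≥ (2/π)·|t−τ|. -/

import Mathlib

open Real
open scoped RealInnerProductSpace

abbrev E2 := EuclideanSpace ℝ (Fin 2)

lemma arccos_le_of {s x : ℝ} (h0 : 0 ≤ s) (hπ : s ≤ π) (h : Real.cos s ≤ x) :
    Real.arccos x ≤ s := by
  rw [Real.arccos_eq_pi_div_two_sub_arcsin]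
  have m1 : Real.arcsin (Real.cos s) ≤ Real.arcsin x := Real.monotone_arcsin h
  have m2 : Real.arcsin (Real.cos s) = π / 2 - s := by
    rw [← Real.sin_pi_div_two_sub, Real.arcsin_sin (by linarith) (by linarith)]
  linarith

lemma angle_triangle_unit {a b c : E2} (ha : ‖a‖ = 1) (hb : ‖b‖ = 1) (hc : ‖c‖ = 1) :
    Real.arccos ⟪a, c⟫ ≤ Real.arccos ⟪a, b⟫ + Real.arccos ⟪b, c⟫ := by
  set α := Real.arccos ⟪a, b⟫ with hα
  set β := Real.arccos ⟪b, c⟫ with hβ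
  have hα0 := Real.arccos_nonneg ⟪a, b⟫
  have hβ0 := Real.arccos_nonneg ⟪b, c⟫
  by_cases hπ : π ≤ α + β
  · exact (Real.arccos_le_pi _).trans hπ
  push_neg at hπ
  have hab : |⟪a, b⟫| ≤ 1 := by simpa [ha, hb] using abs_real_inner_le_norm a b
  have hbc : |⟪b, c⟫| ≤ 1 := by simpa [hb, hc] using abs_real_inner_le_norm b c
  rw [abs_le] at hab hbc
  apply arccos_le_of (by linarith) hπ.le
  rw [Real.cos_add, hα, hβ, Real.cos_arccos hab.1 hab.2, Real.cos_arccos hbc.1 hbc.2,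
    Real.sin_arccos, Real.sin_arccos]
  set a' : E2 := a - ⟪a, b⟫ • b with ha'
  set c' : E2 := c - ⟪b, c⟫ • b with hc'
  have hbb : ⟪b, b⟫ = (1 : ℝ) := by
    rw [real_inner_self_eq_norm_sq, hb]; norm_num
  have expand : ∀ (x y : E2) (st tt : ℝ), ⟪x - st • b, y - tt • b⟫
      = ⟪x, y⟫ - tt * ⟪x, b⟫ - st * ⟪b, y⟫ + st * tt := by
    intro x y st tt
    rw [inner_sub_left, inner_sub_right, inner_sub_right, real_inner_smul_left,
      real_inner_smul_left, real_inner_smul_right, real_inner_smul_right, hbb]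
    ring
  have h1 : ⟪a', c'⟫ = ⟪a, c⟫ - ⟪a, b⟫ * ⟪b, c⟫ := by
    rw [ha', hc', expand]
    ring
  have h2 : ‖a'‖ = Real.sqrt (1 - ⟪a, b⟫ ^ 2) := by
    rw [← Real.sqrt_sq (norm_nonneg a')]
    congr 1
    rw [← real_inner_self_eq_norm_sq, ha', expand, real_inner_comm b a,
      real_inner_self_eq_norm_sq, ha]
    ring
  have h3 : ‖c'‖ = Real.sqrt (1 - ⟪b, c⟫ ^ 2) := by
    rw [← Real.sqrt_sq (norm_nonneg c')]
    congr 1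
    rw [← real_inner_self_eq_norm_sq, hc', expand, real_inner_comm b c,
      real_inner_self_eq_norm_sq, hc]
    ring
  have h4 : |⟪a', c'⟫| ≤ ‖a'‖ * ‖c'‖ := abs_real_inner_le_norm a' c'
  rw [h1, h2, h3] at h4
  have h5 := (abs_le.1 h4).1
  linarith

lemma arccos_inner_eq {a b : E2} (ha : ‖a‖ = 1) (hb : ‖b‖ = 1) :
    Real.arccos ⟪a, b⟫ = 2 * Real.arcsin (‖a - b‖ / 2) := by
  set y := ‖a - b‖ / 2 with hy
  have hy0 : 0 ≤ y := by positivity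
  have hy1 : y ≤ 1 := by
    have : ‖a - b‖ ≤ ‖a‖ + ‖b‖ := norm_sub_le a b
    rw [ha, hb] at this
    rw [hy]; linarith
  have hinner : ⟪a, b⟫ = 1 - 2 * y ^ 2 := by
    have hns : ‖a - b‖ ^ 2 = 2 - 2 * ⟪a, b⟫ := by
      rw [@norm_sub_sq_real, ha, hb]; ring
    have : (2 * y) ^ 2 = 2 - 2 * ⟪a, b⟫ := by
      rw [← hns, hy]; ring
    nlinarith
  have hcos : Real.cos (2 * Real.arcsin y) = 1 - 2 * y ^ 2 := by
    rw [Real.cos_two_mul']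
    have hsq := Real.sin_sq_add_cos_sq (Real.arcsin y)
    rw [Real.sin_arcsin (by linarith) hy1] at hsq ⊢
    linarith
  have h0 : 0 ≤ 2 * Real.arcsin y := by
    have := Real.arcsin_nonneg.2 hy0; linarith
  have h1 : 2 * Real.arcsin y ≤ π := by
    have := Real.arcsin_le_pi_div_two y; linarith
  rw [hinner, ← hcos, Real.arccos_cos h0 h1]

lemma chain_bound (K₀ : ℝ) (p : ℝ → E2) (hunit : ∀ t, ‖deriv p t‖ = 1)
    (hlip : ∀ t s : ℝ, ‖deriv p t - deriv p s‖ ≤ K₀ * |t - s|)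
    {δ : ℝ} (hδ : 0 ≤ δ) (a : ℝ) :
    ∀ n : ℕ, Real.arccos ⟪deriv p a, deriv p (a + n * δ)⟫
      ≤ n * (2 * Real.arcsin (K₀ * δ / 2)) := by
  intro n
  induction n with
  | zero =>
    simp only [Nat.cast_zero, zero_mul, add_zero]
    have : ⟪deriv p a, deriv p a⟫ = (1 : ℝ) := by
      rw [real_inner_self_eq_norm_sq, hunit]; norm_num
    rw [this, Real.arccos_one]
  | succ n ih =>
    have htri := angle_triangle_unit (hunit a) (hunit (a + n * δ)) (hunit (a + (n + 1 : ℕ) * δ))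
    have hstep : Real.arccos ⟪deriv p (a + n * δ), deriv p (a + (n + 1 : ℕ) * δ)⟫
        ≤ 2 * Real.arcsin (K₀ * δ / 2) := by
      rw [arccos_inner_eq (hunit _) (hunit _)]
      have hd : ‖deriv p (a + n * δ) - deriv p (a + (n + 1 : ℕ) * δ)‖ ≤ K₀ * δ := by
        have := hlip (a + n * δ) (a + (n + 1 : ℕ) * δ)
        have heq : |a + n * δ - (a + (n + 1 : ℕ) * δ)| = δ := by
          push_cast
          rw [show a + n * δ - (a + (n + 1) * δ) = -δ by ring, abs_neg, abs_of_nonneg hδ]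
        rw [heq] at this
        exact this
      have hmono := Real.monotone_arcsin
        (show ‖deriv p (a + n * δ) - deriv p (a + (n + 1 : ℕ) * δ)‖ / 2 ≤ K₀ * δ / 2 by linarith)
      linarith
    calc Real.arccos ⟪deriv p a, deriv p (a + (n + 1 : ℕ) * δ)⟫
        ≤ _ + _ := htri
      _ ≤ n * (2 * Real.arcsin (K₀ * δ / 2)) + 2 * Real.arcsin (K₀ * δ / 2) := by
          exact add_le_add ih hstep
      _ = (n + 1 : ℕ) * (2 * Real.arcsin (K₀ * δ / 2)) := by push_cast; ring

lemma angle_lip (K₀ : ℝ) (hK : 0 < K₀) (p : ℝ → E2) (hunit : ∀ t, ‖deriv p t‖ = 1)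
    (hlip : ∀ t s : ℝ, ‖deriv p t - deriv p s‖ ≤ K₀ * |t - s|)
    {a b : ℝ} (hab : a ≤ b) :
    Real.arccos ⟪deriv p a, deriv p b⟫ ≤ K₀ * (b - a) := by
  set c := K₀ * (b - a) with hc
  have hc0 : 0 ≤ c := mul_nonneg hK.le (by linarith)
  have key : ∀ n : ℕ, 0 < n →
      Real.arccos ⟪deriv p a, deriv p b⟫ ≤ n * (2 * Real.arcsin (c / (2 * n))) := by
    intro n hn
    have hn' : (n : ℝ) ≠ 0 := Nat.cast_ne_zero.2 hn.ne'
    have hδ : 0 ≤ (b - a) / n := div_nonneg (by linarith) (Nat.cast_nonneg n)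
    have hkey := chain_bound K₀ p hunit hlip hδ a n
    have hb' : a + n * ((b - a) / n) = b := by field_simp; ring
    have harg : K₀ * ((b - a) / n) / 2 = c / (2 * n) := by
      rw [hc]; ring
    rw [hb', harg] at hkey
    exact hkey
  rcases eq_or_lt_of_le hc0 with hc0' | hc0'
  · have := key 1 one_pos
    simp [← hc0'] at this
    simpa [← hc0'] using this
  · have hslope : Filter.Tendsto (fun y : ℝ => Real.arcsin y / y)
        (nhdsWithin 0 {(0:ℝ)}ᶜ) (nhds 1) := by
      have hder : HasDerivAt Real.arcsin 1 0 := by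
        have := Real.hasDerivAt_arcsin (by norm_num) (by norm_num : (0:ℝ) ≠ 1)
        simpa using this
      have h := hasDerivAt_iff_tendsto_slope.mp hder
      rw [slope_fun_def_field] at h
      apply h.congr
      intro y
      simp [Real.arcsin_zero]
    have hseq : Filter.Tendsto (fun n : ℕ => c / (2 * n)) Filter.atTop
        (nhdsWithin 0 {(0:ℝ)}ᶜ) := by
      apply tendsto_nhdsWithin_of_tendsto_nhds_of_eventually_within
      · have h := tendsto_const_div_atTop_nhds_zero_nat (c / 2)
        apply h.congr
        intro n
        rw [div_div]
      · filter_upwards [Filter.eventually_gt_atTop 0] with n hn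
        have hpos : 0 < c / (2 * n) := by positivity
        simp [hpos.ne']
    have hlim : Filter.Tendsto (fun n : ℕ => (n : ℝ) * (2 * Real.arcsin (c / (2 * n))))
        Filter.atTop (nhds c) := by
      have h1 : Filter.Tendsto (fun n : ℕ => c * (Real.arcsin (c / (2 * n)) / (c / (2 * n))))
          Filter.atTop (nhds (c * 1)) :=
        Filter.Tendsto.mul tendsto_const_nhds (hslope.comp hseq)
      rw [mul_one] at h1
      apply h1.congr'
      filter_upwards [Filter.eventually_gt_atTop 0] with n hn
      have hn' : (n : ℝ) ≠ 0 := Nat.cast_ne_zero.2 hn.ne'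
      field_simp
    exact ge_of_tendsto hlim (by
      filter_upwards [Filter.eventually_gt_atTop 0] with n hn
      exact key n hn)

theorem stmt_13 (K₀ : ℝ) (hK : 0 < K₀) (p : ℝ → EuclideanSpace ℝ (Fin 2))
    (hd : Differentiable ℝ p) (hunit : ∀ t, ‖deriv p t‖ = 1)
    (hlip : ∀ t s : ℝ, ‖deriv p t - deriv p s‖ ≤ K₀ * |t - s|) :
    ∀ t τ : ℝ, |t - τ| ≤ Real.pi / K₀ →
      (2 / Real.pi) * |t - τ| ≤ ‖p t - p τ‖ := by
  have hcont : Continuous (deriv p) := by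
    have hl : LipschitzWith (Real.toNNReal K₀) (deriv p) := by
      apply LipschitzWith.of_dist_le_mul
      intro x y
      rw [dist_eq_norm]
      calc ‖deriv p x - deriv p y‖ ≤ K₀ * |x - y| := hlip x y
        _ = (Real.toNNReal K₀) * dist x y := by
            rw [Real.coe_toNNReal _ hK.le, Real.dist_eq]
    exact hl.continuous
  have main : ∀ a b : ℝ, a ≤ b → b - a ≤ π / K₀ → (2 / π) * (b - a) ≤ ‖p b - p a‖ := by
    intro a b hab hble
    set m := (a + b) / 2 with hm
    set v := deriv p m with hv
    have hπK : K₀ * (b - a) ≤ π := by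
      rw [le_div_iff₀ hK] at hble; linarith
    have hL2 : K₀ * ((b - a) / 2) ≤ π / 2 := by linarith
    have hlow : ∀ s ∈ Set.Icc a b, Real.cos (K₀ * (s - m)) ≤ ⟪deriv p s, v⟫ := by
      intro s hs
      have habs : |⟪deriv p s, v⟫| ≤ 1 := by
        simpa [hunit, hv] using abs_real_inner_le_norm (deriv p s) v
      have hangle : Real.arccos ⟪deriv p s, v⟫ ≤ K₀ * |s - m| := by
        rcases le_total s m with h | h
        · have h1 := angle_lip K₀ hK p hunit hlip h
          rw [abs_of_nonpos (by linarith), hv]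
          rw [show -(s - m) = m - s by ring]
          exact h1
        · have h1 := angle_lip K₀ hK p hunit hlip h
          rw [abs_of_nonneg (by linarith), hv, real_inner_comm]
          exact h1
      have hsm : |s - m| ≤ (b - a) / 2 := by
        cases' hs with h1 h2
        rw [abs_le, hm]
        constructor <;> linarith
      have hKπ : K₀ * |s - m| ≤ π := by
        have h0 : 0 ≤ |s - m| := abs_nonneg _
        nlinarith [Real.pi_pos]
      have hcc := Real.cos_le_cos_of_nonneg_of_le_pi
        (Real.arccos_nonneg ⟪deriv p s, v⟫) hKπ hangle
      rw [Real.cos_arccos (abs_le.1 habs).1 (abs_le.1 habs).2] at hcc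
      have heq : K₀ * |s - m| = |K₀ * (s - m)| := by
        rw [abs_mul, abs_of_nonneg hK.le]
      rw [heq, Real.cos_abs] at hcc
      exact hcc
    have hg : ∀ s : ℝ, HasDerivAt (fun u => ⟪p u, v⟫) ⟪deriv p s, v⟫ s := by
      intro s
      have := HasDerivAt.inner ℝ ((hd s).hasDerivAt) (hasDerivAt_const s v)
      simpa using this
    have hint1 : IntervalIntegrable (fun s => ⟪deriv p s, v⟫) MeasureTheory.volume a b :=
      (hcont.inner continuous_const).intervalIntegrable a b
    have hftc : (∫ s in a..b, ⟪deriv p s, v⟫) = ⟪p b, v⟫ - ⟪p a, v⟫ :=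
      intervalIntegral.integral_eq_sub_of_hasDerivAt (fun s _ => hg s) hint1
    have hccont : Continuous (fun s : ℝ => Real.cos (K₀ * (s - m))) :=
      Real.continuous_cos.comp (continuous_const.mul (continuous_id.sub continuous_const))
    have hic : IntervalIntegrable (fun s : ℝ => Real.cos (K₀ * (s - m)))
        MeasureTheory.volume a b := hccont.intervalIntegrable a b
    have hcosint : (∫ s in a..b, Real.cos (K₀ * (s - m)))
        = 2 * Real.sin (K₀ * ((b - a) / 2)) / K₀ := by
      have hF : ∀ s ∈ Set.uIcc a b,
          HasDerivAt (fun u => Real.sin (K₀ * (u - m)) / K₀) (Real.cos (K₀ * (s - m))) s := by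
        intro s _
        have h1 : HasDerivAt (fun u : ℝ => K₀ * (u - m)) K₀ s := by
          simpa using ((hasDerivAt_id s).sub_const m).const_mul K₀
        have h2 := (Real.hasDerivAt_sin (K₀ * (s - m))).comp s h1
        have h3 := h2.div_const K₀
        simpa [mul_div_assoc, mul_div_cancel_left₀, hK.ne'] using h3
      rw [intervalIntegral.integral_eq_sub_of_hasDerivAt hF hic]
      have hbm : K₀ * (b - m) = K₀ * ((b - a) / 2) := by rw [hm]; ring
      have ham : K₀ * (a - m) = -(K₀ * ((b - a) / 2)) := by rw [hm]; ring
      rw [hbm, ham, Real.sin_neg]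
      ring
    have hmono := intervalIntegral.integral_mono_on hab hic hint1 hlow
    have hjordan : (2 / π) * (b - a) ≤ 2 * Real.sin (K₀ * ((b - a) / 2)) / K₀ := by
      have hx0 : 0 ≤ K₀ * ((b - a) / 2) := mul_nonneg hK.le (by linarith)
      have hj := Real.mul_le_sin hx0 hL2
      rw [le_div_iff₀ hK]
      nlinarith [Real.pi_pos]
    have hinner_le : ⟪p b, v⟫ - ⟪p a, v⟫ ≤ ‖p b - p a‖ := by
      have h1 : ⟪p b - p a, v⟫ ≤ ‖p b - p a‖ * ‖v‖ := real_inner_le_norm _ _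
      rw [inner_sub_left] at h1
      rw [hv, hunit m, mul_one] at h1
      exact h1
    calc (2 / π) * (b - a) ≤ 2 * Real.sin (K₀ * ((b - a) / 2)) / K₀ := hjordan
      _ = ∫ s in a..b, Real.cos (K₀ * (s - m)) := hcosint.symm
      _ ≤ ∫ s in a..b, ⟪deriv p s, v⟫ := hmono
      _ = ⟪p b, v⟫ - ⟪p a, v⟫ := hftc
      _ ≤ ‖p b - p a‖ := hinner_le
  intro t τ hle
  rcases le_total τ t with h | h
  · have := main τ t h (by rwa [abs_of_nonneg (by linarith)] at hle)
    rwa [abs_of_nonneg (by linarith)]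
  · have := main t τ h (by rwa [abs_sub_comm, abs_of_nonneg (by linarith)] at hle)
    rw [abs_sub_comm t τ, abs_of_nonneg (by linarith), norm_sub_rev]
    exact this
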